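/- A Banach lattice E has the positive Schur property if and only if every pairwise disjoint absolutely weakly null sequence in E is norm null. -/

import Mathlib

set_option linter.unusedSectionVars false

open Filter Topology Pointwise MeasureTheory


section Defs

variable {E : Type*} [NormedAddCommGroup E] [Lattice E] [HasSolidNorm E] [IsOrderedAddMonoid E] [NormedSpace ℝ E]

/-- The pseudometric on a Banach lattice induced by a positive continuous linear functional `f`,
given by `dist x y = f |x - y|`. -/
noncomputable def absSeminormDist (f : E →L[ℝ] ℝ) (hf : ∀ x : E, 0 ≤ x → 0 ≤ f x) :
    PseudoMetricSpace E where
  dist x y := f |x - y|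
  dist_self x := by simp
  dist_comm x y := by simp [abs_sub_comm]
  dist_triangle x y z := by
    have h1 : |x - z| ≤ |x - y| + |y - z| := by
      calc |x - z| = |(x - y) + (y - z)| := by abel_nf
      _ ≤ |x - y| + |y - z| := abs_add_le _ _
    have h2 := hf (|x - y| + |y - z| - |x - z|) (sub_nonneg.mpr h1)
    simp only [map_sub, map_add] at h2
    linarith

/-- The absolute weak topology `|σ|(E, E*)` on a Banach lattice `E`: the topology generated by
the lattice seminorms `x ↦ |x*|(|x|) = x*(|x|)`, for `x*` ranging over the positive continuous
linear functionals on `E`. -/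
noncomputable def absWeakTopology (E : Type*) [NormedAddCommGroup E] [Lattice E] [HasSolidNorm E] [IsOrderedAddMonoid E] [NormedSpace ℝ E] :
    TopologicalSpace E :=
  ⨅ f : {f : E →L[ℝ] ℝ // ∀ x : E, 0 ≤ x → 0 ≤ f x},
    (absSeminormDist f.1 f.2).toUniformSpace.toTopologicalSpace

end Defs

set_option maxHeartbeats 1000000



section Helpers

variable {E : Type*} [NormedAddCommGroup E] [Lattice E] [HasSolidNorm E] [IsOrderedAddMonoid E]

lemma my_inf_sup_right (x y z : E) : (x ⊔ y) ⊓ z = x ⊓ z ⊔ y ⊓ z :=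
  @inf_sup_right E (AddCommGroup.toDistribLattice E) x y z

lemma posPart_inf_posPart (a b : E) : a⁺ ⊓ b⁺ = (a ⊓ b)⁺ := by
  rw [posPart_def, posPart_def, posPart_def, my_inf_sup_right,
    @inf_sup_left E (AddCommGroup.toDistribLattice E), @inf_sup_left E (AddCommGroup.toDistribLattice E)]
  simp [sup_assoc]

/-- `(a - b)⁺ = a - a ⊓ b` -/
lemma posPart_sub_eq (a b : E) : (a - b)⁺ = a - a ⊓ b := by
  rw [posPart_def, sub_eq_add_neg a (a ⊓ b), neg_inf, add_sup, sup_comm]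
  simp [sub_eq_add_neg]

/-- inf subadditivity for nonneg elements -/
lemma inf_add_le (x a b : E) (hx : 0 ≤ x) (ha : 0 ≤ a) (hb : 0 ≤ b) :
    x ⊓ (a + b) ≤ x ⊓ a + x ⊓ b := by
  set d := x ⊓ (a + b) with hd
  have hd0 : 0 ≤ d := le_inf hx (add_nonneg ha hb)
  have hdx : d ≤ x := inf_le_left
  have hdab : d ≤ a + b := inf_le_right
  have h2 : (d - a)⁺ ≤ x ⊓ b := by
    refine le_inf ?_ ?_
    · calc (d - a)⁺ ≤ d⁺ := posPart_mono (by simpa using ha)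
        _ = d := posPart_of_nonneg hd0
        _ ≤ x := hdx
    · exact sup_le (by rwa [sub_le_iff_le_add']) hb
  calc d = d ⊓ a + (d - a)⁺ := by rw [posPart_sub_eq]; abel
    _ ≤ x ⊓ a + x ⊓ b := add_le_add (inf_le_inf_right a hdx) h2

/-- disjointness is inherited by sums -/
lemma inf_eq_zero_add (x a b : E) (hx : 0 ≤ x) (ha : 0 ≤ a) (hb : 0 ≤ b)
    (h1 : x ⊓ a = 0) (h2 : x ⊓ b = 0) : x ⊓ (a + b) = 0 :=
  le_antisymm (by simpa [h1, h2] using inf_add_le x a b hx ha hb) (le_inf hx (add_nonneg ha hb))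

lemma inf_nonneg' {a b : E} (ha : 0 ≤ a) (hb : 0 ≤ b) : 0 ≤ a ⊓ b := le_inf ha hb

lemma norm_inf_le_right {a b : E} (ha : 0 ≤ a) (hb : 0 ≤ b) : ‖a ⊓ b‖ ≤ ‖b‖ := by
  apply norm_le_norm_of_abs_le_abs
  rw [abs_of_nonneg (inf_nonneg' ha hb), abs_of_nonneg hb]
  exact inf_le_right

lemma posPart_le_of_le {a b : E} (h : a ≤ b) (hb : 0 ≤ b) : a⁺ ≤ b := sup_le h hb

end Helpers
open Filter Topology Pointwise

section RK
variable {E : Type*} [NormedAddCommGroup E] [Lattice E] [HasSolidNorm E] [IsOrderedAddMonoid E] [NormedSpace ℝ E] [PosSMulStrictMono ℝ E]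

private lemma smul_posPart' (c : ℝ) (hc : 0 ≤ c) (x : E) : (c • x)⁺ = c • x⁺ := by
  rcases eq_or_lt_of_le hc with h | h
  · simp [← h]
  rw [posPart_def, posPart_def]
  refine le_antisymm ?_ ?_
  · refine sup_le ?_ ?_
    · exact smul_le_smul_of_nonneg_left le_sup_left hc
    · exact smul_nonneg hc le_sup_right
  · have h1 : x ⊔ 0 ≤ c⁻¹ • ((c • x) ⊔ 0) := by
      refine sup_le ?_ ?_
      · have h2 : c • x ≤ (c • x) ⊔ 0 := le_sup_left
        have h3 := smul_le_smul_of_nonneg_left h2 (le_of_lt (inv_pos.mpr h))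
        rwa [inv_smul_smul₀ (ne_of_gt h)] at h3
      · exact smul_nonneg (le_of_lt (inv_pos.mpr h)) le_sup_right
    have h4 := smul_le_smul_of_nonneg_left h1 hc
    rwa [smul_inv_smul₀ (ne_of_gt h)] at h4

private lemma smul_negPart' (c : ℝ) (hc : 0 ≤ c) (x : E) : (c • x)⁻ = c • x⁻ := by
  calc (c • x)⁻ = (-(c • x))⁺ := (posPart_neg _).symm
    _ = (c • (-x))⁺ := by rw [smul_neg]
    _ = c • (-x)⁺ := smul_posPart' c hc (-x)
    _ = c • x⁻ := by rw [posPart_neg]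

private def pS (x : E) : Set E := {y | 0 ≤ y ∧ y ≤ x}

noncomputable def pFun (f : E →L[ℝ] ℝ) (x : E) : ℝ := sSup ((fun y => f y) '' pS x)

variable (f : E →L[ℝ] ℝ)

private lemma pS_mem_zero {x : E} (hx : 0 ≤ x) : (0:E) ∈ pS x := ⟨le_refl _, hx⟩

private lemma pFun_bddAbove {x : E} (hx : 0 ≤ x) : BddAbove ((fun y => f y) '' pS x) := by
  refine ⟨‖f‖ * ‖x‖, ?_⟩
  rintro v ⟨y, ⟨hy0, hyx⟩, rfl⟩
  calc f y ≤ |f y| := le_abs_self _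
    _ ≤ ‖f‖ * ‖y‖ := by simpa using f.le_opNorm y
    _ ≤ ‖f‖ * ‖x‖ := by
        refine mul_le_mul_of_nonneg_left ?_ (norm_nonneg f)
        refine norm_le_norm_of_abs_le_abs ?_
        rwa [abs_of_nonneg hy0, abs_of_nonneg (le_trans hy0 hyx)]

private lemma pFun_nonempty {x : E} (hx : 0 ≤ x) : ((fun y => f y) '' pS x).Nonempty :=
  ⟨f 0, ⟨0, pS_mem_zero hx, rfl⟩⟩

private lemma pFun_nonneg {x : E} (hx : 0 ≤ x) : 0 ≤ pFun f x := by
  have := le_csSup (pFun_bddAbove f hx) ⟨0, pS_mem_zero hx, rfl⟩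
  simpa [pFun] using this

private lemma le_pFun {x : E} (hx : 0 ≤ x) : f x ≤ pFun f x :=
  le_csSup (pFun_bddAbove f hx) ⟨x, ⟨hx, le_refl _⟩, rfl⟩

private lemma pFun_le {x : E} (hx : 0 ≤ x) : pFun f x ≤ ‖f‖ * ‖x‖ := by
  refine csSup_le (pFun_nonempty f hx) ?_
  rintro v ⟨y, ⟨hy0, hyx⟩, rfl⟩
  calc f y ≤ |f y| := le_abs_self _
    _ ≤ ‖f‖ * ‖y‖ := by simpa using f.le_opNorm y
    _ ≤ ‖f‖ * ‖x‖ := by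
        refine mul_le_mul_of_nonneg_left ?_ (norm_nonneg f)
        refine norm_le_norm_of_abs_le_abs ?_
        rwa [abs_of_nonneg hy0, abs_of_nonneg (le_trans hy0 hyx)]

private lemma pFun_mem_le {x : E} (hx : 0 ≤ x) {y : E} (hy : y ∈ pS x) : f y ≤ pFun f x :=
  le_csSup (pFun_bddAbove f hx) ⟨y, hy, rfl⟩

private lemma pFun_add {x y : E} (hx : 0 ≤ x) (hy : 0 ≤ y) :
    pFun f (x + y) = pFun f x + pFun f y := by
  have hxy : 0 ≤ x + y := add_nonneg hx hy
  refine le_antisymm ?_ ?_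
  · refine csSup_le (pFun_nonempty f hxy) ?_
    rintro v ⟨z, ⟨hz0, hzxy⟩, rfl⟩
    have hzx : z ⊓ x ∈ pS x := ⟨le_inf hz0 hx, inf_le_right⟩
    have h1 : (z - x)⁺ ∈ pS y := by
      constructor
      · exact posPart_nonneg _
      · exact sup_le (by rwa [sub_le_iff_le_add']) hy
    have hdecomp : z = z ⊓ x + (z - x)⁺ := by rw [posPart_sub_eq]; abel
    calc f z = f (z ⊓ x) + f ((z - x)⁺) := by conv_lhs => rw [hdecomp, map_add]
      _ ≤ pFun f x + pFun f y := add_le_add (pFun_mem_le f hx hzx) (pFun_mem_le f hy h1)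
  · rw [← le_sub_iff_add_le]
    refine csSup_le (pFun_nonempty f hx) ?_
    rintro w ⟨a, ha, rfl⟩
    show f a ≤ pFun f (x + y) - pFun f y
    rw [le_sub_iff_add_le, add_comm, ← le_sub_iff_add_le]
    refine csSup_le (pFun_nonempty f hy) ?_
    rintro v ⟨b, hb, rfl⟩
    show f b ≤ pFun f (x + y) - f a
    rw [le_sub_iff_add_le, add_comm, ← map_add]
    exact pFun_mem_le f hxy ⟨add_nonneg ha.1 hb.1, add_le_add ha.2 hb.2⟩

private lemma pFun_smul {x : E} (hx : 0 ≤ x) {c : ℝ} (hc : 0 < c) :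
    pFun f (c • x) = c * pFun f x := by
  have hcx : 0 ≤ c • x := smul_nonneg hc.le hx
  refine le_antisymm ?_ ?_
  · refine csSup_le (pFun_nonempty f hcx) ?_
    rintro v ⟨y, ⟨hy0, hyx⟩, rfl⟩
    have h1 : c⁻¹ • y ∈ pS x := by
      constructor
      · exact smul_nonneg (inv_pos.mpr hc).le hy0
      · have := smul_le_smul_of_nonneg_left hyx (inv_pos.mpr hc).le
        rwa [inv_smul_smul₀ hc.ne'] at this
    have h2 : f y = c * f (c⁻¹ • y) := by
      rw [ContinuousLinearMap.map_smul, smul_eq_mul, ← mul_assoc, mul_inv_cancel₀ hc.ne', one_mul]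
    show f y ≤ c * pFun f x
    rw [h2]
    exact mul_le_mul_of_nonneg_left (pFun_mem_le f hx h1) hc.le
  · rw [mul_comm, ← le_div_iff₀ hc]
    refine csSup_le (pFun_nonempty f hx) ?_
    rintro v ⟨y, ⟨hy0, hyx⟩, rfl⟩
    show f y ≤ pFun f (c • x) / c
    rw [le_div_iff₀ hc, mul_comm]
    have h1 : c • y ∈ pS (c • x) := ⟨smul_nonneg hc.le hy0, smul_le_smul_of_nonneg_left hyx hc.le⟩
    have h2 : c * f y = f (c • y) := by rw [ContinuousLinearMap.map_smul, smul_eq_mul]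
    rw [h2]
    exact pFun_mem_le f hcx h1

/-- Riesz–Kantorovich: positive part of a continuous functional on a Banach lattice. -/
lemma exists_posPart_functional (f : E →L[ℝ] ℝ) :
    ∃ F : E →L[ℝ] ℝ, (∀ x : E, 0 ≤ x → 0 ≤ F x) ∧ (∀ x : E, 0 ≤ x → f x ≤ F x) ∧
      (∀ x : E, |F x| ≤ ‖f‖ * ‖x‖) := by
  classical
  set F : E → ℝ := fun x => pFun f x⁺ - pFun f x⁻ with hF
  have hFpos : ∀ x : E, 0 ≤ x → F x = pFun f x := by
    intro x hx
    have h1 : x⁺ = x := posPart_of_nonneg hx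
    have h2 : x⁻ = 0 := negPart_of_nonneg hx
    have h3 : pFun f 0 = 0 := by
      have := pFun_le f (le_refl (0:E))
      have h4 := pFun_nonneg f (le_refl (0:E))
      simp only [norm_zero, mul_zero] at this
      linarith
    simp [hF, h1, h2, h3]
  have key : ∀ a b c d : E, 0 ≤ a → 0 ≤ b → 0 ≤ c → 0 ≤ d → a + d = c + b →
      pFun f a - pFun f b = pFun f c - pFun f d := by
    intro a b c d ha hb hc hd h
    have := pFun_add f ha hd
    rw [h, pFun_add f hc hb] at this
    linarith
  have hFadd : ∀ x y : E, F (x + y) = F x + F y := by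
    intro x y
    have e1 : (x + y)⁺ + (x⁻ + y⁻) = ((x + y)⁻ + x⁺) + y⁺ := by
      have h1 : (x+y)⁺ = (x+y) + (x+y)⁻ := eq_add_of_sub_eq (posPart_sub_negPart (x+y))
      have h2 : x⁺ = x + x⁻ := eq_add_of_sub_eq (posPart_sub_negPart x)
      have h3 : y⁺ = y + y⁻ := eq_add_of_sub_eq (posPart_sub_negPart y)
      rw [h1, h2, h3]; abel
    have hadd3 : pFun f ((x + y)⁺ + (x⁻ + y⁻)) = pFun f (x+y)⁺ + (pFun f x⁻ + pFun f y⁻) := by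
      rw [pFun_add f (posPart_nonneg _) (add_nonneg (negPart_nonneg _) (negPart_nonneg _)),
        pFun_add f (negPart_nonneg _) (negPart_nonneg _)]
    have hadd4 : pFun f (((x + y)⁻ + x⁺) + y⁺) = (pFun f (x+y)⁻ + pFun f x⁺) + pFun f y⁺ := by
      rw [pFun_add f (add_nonneg (negPart_nonneg _) (posPart_nonneg _)) (posPart_nonneg _),
        pFun_add f (negPart_nonneg _) (posPart_nonneg _)]
    have := e1 ▸ hadd3
    rw [hadd4] at this
    simp only [hF]
    linarith
  have hFneg : ∀ x : E, F (-x) = - F x := by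
    intro x
    have h1 : (-x)⁺ = x⁻ := by rw [posPart_def, negPart_def]
    have h2 : (-x)⁻ = x⁺ := by rw [posPart_def, negPart_def, neg_neg]
    simp [hF, h1, h2]
  have hFsmul : ∀ (c : ℝ) (x : E), F (c • x) = c * F x := by
    intro c x
    rcases lt_trichotomy c 0 with h | h | h
    · have : F (c • x) = F (-((-c) • x)) := by rw [neg_smul, neg_neg]
      rw [this, hFneg]
      have hc' : 0 < -c := by linarith
      have e1 : ((-c) • x)⁺ = (-c) • x⁺ := smul_posPart' _ hc'.le x
      have e2 : ((-c) • x)⁻ = (-c) • x⁻ := smul_negPart' _ hc'.le x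
      simp only [hF, e1, e2, pFun_smul f (posPart_nonneg x) hc', pFun_smul f (negPart_nonneg x) hc']
      ring
    · simp only [h, zero_smul, zero_mul]
      have h1 : (0:E)⁺ = 0 := by simp
      have h2 : (0:E)⁻ = 0 := by simp
      simp [hF, h1, h2]
    · have e1 : (c • x)⁺ = c • x⁺ := smul_posPart' _ h.le x
      have e2 : (c • x)⁻ = c • x⁻ := smul_negPart' _ h.le x
      simp only [hF, e1, e2, pFun_smul f (posPart_nonneg x) h, pFun_smul f (negPart_nonneg x) h]
      ring
  have hbound : ∀ x : E, |F x| ≤ ‖f‖ * ‖x‖ := by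
    intro x
    have h1 : 0 ≤ pFun f x⁺ := pFun_nonneg f (posPart_nonneg x)
    have h2 : 0 ≤ pFun f x⁻ := pFun_nonneg f (negPart_nonneg x)
    have h3 : pFun f x⁺ ≤ ‖f‖ * ‖x‖ := by
      refine le_trans (pFun_le f (posPart_nonneg x)) ?_
      refine mul_le_mul_of_nonneg_left ?_ (norm_nonneg f)
      refine norm_le_norm_of_abs_le_abs ?_
      rw [abs_of_nonneg (posPart_nonneg x)]
      exact sup_le (le_abs_self x) (abs_nonneg x)
    have h4 : pFun f x⁻ ≤ ‖f‖ * ‖x‖ := by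
      refine le_trans (pFun_le f (negPart_nonneg x)) ?_
      refine mul_le_mul_of_nonneg_left ?_ (norm_nonneg f)
      refine norm_le_norm_of_abs_le_abs ?_
      rw [abs_of_nonneg (negPart_nonneg x)]
      refine sup_le ?_ (abs_nonneg x)
      exact neg_le_abs x
    rw [abs_le]
    constructor <;> simp only [hF] <;> linarith
  let Flin : E →ₗ[ℝ] ℝ :=
    { toFun := F
      map_add' := hFadd
      map_smul' := hFsmul }
  refine ⟨LinearMap.mkContinuous Flin (‖f‖) (fun x => by
      simpa [Flin, Real.norm_eq_abs] using hbound x), ?_, ?_, ?_⟩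
  · intro x hx
    have := hFpos x hx
    simp only [LinearMap.mkContinuous_apply]
    simp only [Flin, LinearMap.coe_mk, AddHom.coe_mk]
    rw [this]
    exact pFun_nonneg f hx
  · intro x hx
    simp only [LinearMap.mkContinuous_apply]
    simp only [Flin, LinearMap.coe_mk, AddHom.coe_mk]
    rw [hFpos x hx]
    exact le_pFun f hx
  · intro x
    simp only [LinearMap.mkContinuous_apply]
    simp only [Flin, LinearMap.coe_mk, AddHom.coe_mk]
    exact hbound x

end RK

section Chunk3

open Filter Topology

variable {E : Type*} [NormedAddCommGroup E] [Lattice E] [HasSolidNorm E] [IsOrderedAddMonoid E] [NormedSpace ℝ E] [PosSMulStrictMono ℝ E]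

/-- positive norming functional for a nonzero positive element -/
lemma exists_norming (a : E) (ha : 0 ≤ a) (h0 : a ≠ 0) :
    ∃ F : E →L[ℝ] ℝ, (∀ x : E, 0 ≤ x → 0 ≤ F x) ∧ ‖a‖ ≤ F a ∧ ∀ x : E, |F x| ≤ ‖x‖ := by
  obtain ⟨g, hg1, hg2⟩ := exists_dual_vector ℝ a (norm_ne_zero_iff.mpr h0)
  obtain ⟨F, hFpos, hge, hbd⟩ := exists_posPart_functional g
  refine ⟨F, hFpos, ?_, fun x => by simpa [hg1] using hbd x⟩
  have hga : g a = ‖a‖ := by exact_mod_cast hg2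
  rw [← hga]
  exact hge a ha

/-- absolutely weakly null (for a sequence, via values; applied to nonneg sequences) -/
def AWNull (h : ℕ → E) : Prop :=
  ∀ f : E →L[ℝ] ℝ, (∀ v : E, 0 ≤ v → 0 ≤ f v) → Tendsto (fun n => f (h n)) atTop (𝓝 0)

/-- the disjoint-null property (positive form) -/
def DisjNull (E : Type*) [NormedAddCommGroup E] [Lattice E] [HasSolidNorm E] [IsOrderedAddMonoid E] [NormedSpace ℝ E] : Prop :=
  ∀ z : ℕ → E, (∀ n, 0 ≤ z n) → (∀ i j, i ≠ j → z i ⊓ z j = 0) → AWNull z →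
    Tendsto (fun n => ‖z n‖) atTop (𝓝 0)

lemma pm_tendsto_iff {X : Type*} (m : PseudoMetricSpace X) (x : ℕ → X) (a : X) :
    Tendsto x atTop (@nhds X m.toUniformSpace.toTopologicalSpace a) ↔
      Tendsto (fun n => @dist X m.toDist (x n) a) atTop (𝓝 0) := by
  letI := m
  exact tendsto_iff_dist_tendsto_zero

lemma tendsto_absWeak_iff (x : ℕ → E) :
    Tendsto x atTop (@nhds E (absWeakTopology E) 0) ↔
      ∀ f : E →L[ℝ] ℝ, ∀ hf : (∀ v : E, 0 ≤ v → 0 ≤ f v),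
        Tendsto (fun n => f |x n|) atTop (𝓝 0) := by
  rw [absWeakTopology, _root_.nhds_iInf, tendsto_iInf]
  constructor
  · intro H f hf
    have h1 := (pm_tendsto_iff (absSeminormDist f hf) x 0).mp (H ⟨f, hf⟩)
    have h2 : (fun n => @dist E (absSeminormDist f hf).toDist (x n) 0) = fun n => f |x n| := by
      funext n
      show f |x n - 0| = f |x n|
      rw [sub_zero]
    rwa [h2] at h1
  · intro H i
    refine (pm_tendsto_iff (absSeminormDist i.1 i.2) x 0).mpr ?_
    have h2 : (fun n => @dist E (absSeminormDist i.1 i.2).toDist (x n) 0) = fun n => i.1 |x n| := by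
      funext n
      show i.1 |x n - 0| = i.1 |x n|
      rw [sub_zero]
    rw [h2]
    exact H i.1 i.2

/-- dependent recursion for subsequences -/
noncomputable def recSeq (F : (k : ℕ) → ((i : ℕ) → i < k → ℕ) → ℕ) : ℕ → ℕ
  | k => F k (fun i _h => recSeq F i)
termination_by k => k
decreasing_by exact _h

lemma recSeq_eq (F : (k : ℕ) → ((i : ℕ) → i < k → ℕ) → ℕ) (k : ℕ) :
    recSeq F k = F k (fun i _ => recSeq F i) := by
  rw [recSeq]

lemma exists_good_subseq (h : ℕ → E) (c : ℕ → ℕ → ℝ) (hc : ∀ i k, 0 < c i k)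
    (hfin : ∀ s : ℕ, ∀ η : ℝ, 0 < η → {t | η ≤ ‖h s ⊓ h t‖}.Finite) :
    ∃ n : ℕ → ℕ, StrictMono n ∧ ∀ k i, i < k → ‖h (n i) ⊓ h (n k)‖ ≤ c i k := by
  classical
  set F : (k : ℕ) → ((i : ℕ) → i < k → ℕ) → ℕ := fun k prev =>
    sInf {t | ∀ i, (hi : i < k) → prev i hi < t ∧ ‖h (prev i hi) ⊓ h t‖ ≤ c i k} with hFdef
  set n := recSeq F with hn
  have hmem : ∀ k, n k ∈ {t | ∀ i, (hi : i < k) → n i < t ∧ ‖h (n i) ⊓ h t‖ ≤ c i k} := by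
    intro k
    have heq : n k = sInf {t | ∀ i, (hi : i < k) → n i < t ∧ ‖h (n i) ⊓ h t‖ ≤ c i k} := by
      rw [hn, recSeq_eq]
    rw [heq]
    apply Nat.sInf_mem
    -- nonemptiness
    have hbad : ∀ i, i < k → {t | c i k < ‖h (n i) ⊓ h t‖}.Finite := by
      intro i hi
      refine (hfin (n i) (c i k) (hc i k)).subset ?_
      intro t ht
      simp only [Set.mem_setOf_eq] at ht ⊢
      exact ht.le
    set M := (Finset.range k).sup n with hM
    have hfinbad : ((⋃ i ∈ Set.Iio k, {t | c i k < ‖h (n i) ⊓ h t‖}) ∪ Set.Iic M).Finite := by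
      refine Set.Finite.union ?_ (Set.finite_Iic M)
      exact Set.Finite.biUnion (Set.finite_Iio k) (fun i hi => hbad i hi)
    obtain ⟨t, ht⟩ := (hfinbad.infinite_compl).nonempty
    refine ⟨t, ?_⟩
    intro i hi
    simp only [Set.mem_compl_iff, Set.mem_union, Set.mem_iUnion, Set.mem_Iic, Set.mem_setOf_eq,
      not_or, not_exists, not_lt, not_le] at ht
    constructor
    · have h1 : n i ≤ M := Finset.le_sup (Finset.mem_range.mpr hi)
      exact lt_of_le_of_lt h1 ht.2
    · exact ht.1 i hi
  have hlt : ∀ k i, i < k → n i < n k := fun k i hi => ((hmem k) i hi).1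
  refine ⟨n, ?_, fun k i hi => ((hmem k) i hi).2⟩
  intro a b hab
  exact hlt b a hab

end Chunk3

section Chunk4

open Filter Topology

variable {E : Type*} [NormedAddCommGroup E] [Lattice E] [HasSolidNorm E] [IsOrderedAddMonoid E] [NormedSpace ℝ E] [PosSMulStrictMono ℝ E]

lemma inf_sub_const (a b w : E) : (a - w) ⊓ (b - w) = a ⊓ b - w := by
  simp only [sub_eq_add_neg]
  rw [add_comm a, add_comm b, ← add_inf, add_comm]

lemma core_disjointify [CompleteSpace E] (hR : DisjNull E)
    (h : ℕ → E) (hpos : ∀ n, 0 ≤ h n) (hσ : AWNull h) {γ : ℝ} (hγ : 0 < γ)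
    (hnorm : ∀ n, γ ≤ ‖h n‖)
    (hfin : ∀ s η, 0 < η → {t | η ≤ ‖h s ⊓ h t‖}.Finite) : False := by
  classical
  set c : ℕ → ℕ → ℝ := fun i k => γ/16 * (1/2)^i * (1/2)^k with hc
  have hcpos : ∀ i k, 0 < c i k := by
    intro i k
    have := hγ
    positivity
  obtain ⟨n, hmono, hsmall⟩ := exists_good_subseq h c hcpos hfin
  set cij : ℕ → ℕ → E := fun i j => if i = j then 0 else h (n i) ⊓ h (n j) with hcij
  have hcij_nonneg : ∀ i j, 0 ≤ cij i j := by
    intro i j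
    by_cases hij : i = j
    · simp [hcij, hij]
    · simp only [hcij, if_neg hij]
      exact inf_nonneg' (hpos _) (hpos _)
  have hcij_norm : ∀ i j, ‖cij i j‖ ≤ c i j := by
    intro i j
    rcases lt_trichotomy i j with hij | hij | hij
    · simp only [hcij, if_neg (ne_of_lt hij)]
      exact hsmall j i hij
    · subst hij
      simp only [hcij, if_pos rfl, norm_zero]
      exact (hcpos i i).le
    · simp only [hcij, if_neg (ne_of_gt hij)]
      rw [inf_comm]
      refine le_trans (hsmall i j hij) (le_of_eq ?_)
      simp only [hc]; ring
  have hble : ∀ j i, ‖cij i j‖ ≤ (γ/16 * (1/2:ℝ)^j) * (1/2)^i := by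
    intro j i
    refine le_trans (hcij_norm i j) (le_of_eq ?_)
    show γ/16 * (1/2)^i * (1/2)^j = (γ/16 * (1/2:ℝ)^j) * (1/2)^i
    ring
  have hbsum : ∀ j, Summable (fun i => (γ/16 * (1/2:ℝ)^j) * (1/2)^i) :=
    fun j => summable_geometric_two.mul_left _
  have hsummable : ∀ j, Summable (fun i => cij i j) := by
    intro j
    exact Summable.of_norm_bounded (hbsum j) (hble j)
  set s : ℕ → E := fun j => ∑' i, cij i j with hs
  have hs_nonneg : ∀ j, 0 ≤ s j := fun j => tsum_nonneg (fun i => hcij_nonneg i j)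
  have hs_norm : ∀ j, ‖s j‖ ≤ γ/8 := by
    intro j
    have hnsum : Summable (fun i => ‖cij i j‖) :=
      Summable.of_nonneg_of_le (fun i => norm_nonneg _) (hble j) (hbsum j)
    have h1 : ‖s j‖ ≤ ∑' i, ((γ/16 * (1/2:ℝ)^j) * (1/2)^i) := by
      refine le_trans (norm_tsum_le_tsum_norm hnsum) ?_
      exact Summable.tsum_le_tsum (hble j) hnsum (hbsum j)
    rw [tsum_mul_left, tsum_geometric_two] at h1
    refine le_trans h1 ?_
    have h2 : (1/2:ℝ)^j ≤ 1 := by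
      apply pow_le_one₀ <;> norm_num
    nlinarith [hγ]
  have hcle_s : ∀ i j, i ≠ j → h (n i) ⊓ h (n j) ≤ s j := by
    intro i j hij
    have := Summable.le_tsum (hsummable j) i (fun t _ => hcij_nonneg t j)
    simpa only [hcij, if_neg hij] using this
  set D : ℕ → E := fun j => (h (n j) - (s j + s j))⁺ with hD
  have hD_nonneg : ∀ j, 0 ≤ D j := fun j => posPart_nonneg _
  have hD_le : ∀ j, D j ≤ h (n j) := by
    intro j
    calc D j ≤ (h (n j))⁺ := posPart_mono (by simpa using add_nonneg (hs_nonneg j) (hs_nonneg j))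
      _ = h (n j) := posPart_of_nonneg (hpos _)
  have hD_diff : ∀ j, ‖h (n j) - D j‖ ≤ γ/4 := by
    intro j
    have hDj : D j = (h (n j) - (s j + s j))⁺ := rfl
    have h1 : h (n j) - D j = h (n j) ⊓ (s j + s j) := by
      rw [hDj, posPart_sub_eq]
      abel
    rw [h1]
    refine le_trans (norm_inf_le_right (hpos _) (add_nonneg (hs_nonneg j) (hs_nonneg j))) ?_
    calc ‖s j + s j‖ ≤ ‖s j‖ + ‖s j‖ := norm_add_le _ _
      _ ≤ γ/8 + γ/8 := add_le_add (hs_norm j) (hs_norm j)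
      _ = γ/4 := by ring
  have hD_norm : ∀ j, 3*γ/4 ≤ ‖D j‖ := by
    intro j
    have h1 : ‖h (n j)‖ ≤ ‖D j‖ + ‖h (n j) - D j‖ := by
      calc ‖h (n j)‖ = ‖D j + (h (n j) - D j)‖ := by congr 1; abel
        _ ≤ ‖D j‖ + ‖h (n j) - D j‖ := norm_add_le _ _
    have h2 := hnorm (n j)
    have h3 := hD_diff j
    linarith
  have hD_disj : ∀ i j, i ≠ j → D i ⊓ D j = 0 := by
    intro i j hij
    have hcc : h (n i) ⊓ h (n j) ≤ s i := by
      rw [inf_comm]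
      exact hcle_s j i (Ne.symm hij)
    have hcc2 : h (n i) ⊓ h (n j) ≤ s j := hcle_s i j hij
    set cc := h (n i) ⊓ h (n j) with hccdef
    have h1 : D i ≤ (h (n i) - (cc + cc))⁺ :=
      posPart_mono (sub_le_sub_left (add_le_add hcc hcc) _)
    have h2 : D j ≤ (h (n j) - (cc + cc))⁺ :=
      posPart_mono (sub_le_sub_left (add_le_add hcc2 hcc2) _)
    have e : (h (n i) - (cc + cc)) ⊓ (h (n j) - (cc + cc)) = -cc := by
      rw [inf_sub_const, ← hccdef]
      abel
    have h3 : D i ⊓ D j ≤ (-cc)⁺ := by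
      rw [← e, ← posPart_inf_posPart]
      exact inf_le_inf h1 h2
    have h5 : (-cc)⁺ = 0 := by
      rw [posPart_neg]
      refine negPart_of_nonneg ?_
      rw [hccdef]
      exact inf_nonneg' (hpos _) (hpos _)
    rw [h5] at h3
    exact le_antisymm h3 (inf_nonneg' (hD_nonneg i) (hD_nonneg j))
  have hD_AW : AWNull D := by
    intro f hf
    refine squeeze_zero (g := fun j => f (h (n j))) (fun j => hf _ (hD_nonneg j)) (fun j => ?_) ?_
    · have h1 : 0 ≤ f (h (n j)) - f (D j) := by
        rw [← map_sub]
        exact hf _ (by rw [sub_nonneg]; exact hD_le j)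
      linarith
    · exact (hσ f hf).comp hmono.tendsto_atTop
  have hten := hR D hD_nonneg hD_disj hD_AW
  have h6 : ∀ᶠ j in atTop, ‖D j‖ < 3*γ/4 := by
    have hmem : Set.Iio (3*γ/4) ∈ 𝓝 (0:ℝ) := Iio_mem_nhds (by linarith)
    exact hten.eventually (by filter_upwards [hmem] with a ha using ha)
  obtain ⟨j, hj⟩ := h6.exists
  have := hD_norm j
  linarith

end Chunk4

section Chunk5

open Filter Topology

variable {E : Type*} [NormedAddCommGroup E] [Lattice E] [HasSolidNorm E] [IsOrderedAddMonoid E] [NormedSpace ℝ E] [PosSMulStrictMono ℝ E]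

/-- every common positive lower bound of `m` distinct terms is zero -/
def MDisj (m : ℕ) (e : ℕ → E) : Prop :=
  ∀ s : Finset ℕ, s.card = m → ∀ x : E, 0 ≤ x → (∀ i ∈ s, x ≤ e i) → x = 0

lemma lemmaA [CompleteSpace E] (hR : DisjNull E) :
    ∀ m : ℕ, ∀ e : ℕ → E, (∀ k, 0 ≤ e k) → AWNull e → MDisj m e →
      ∀ γ : ℝ, 0 < γ → (∀ k, γ ≤ ‖e k‖) → False := by
  intro m
  induction m with
  | zero =>
      intro e hpos hσ hmd γ hγ hn
      have h0 : e 0 = 0 := hmd ∅ rfl (e 0) (hpos 0) (by simp)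
      have := hn 0
      rw [h0, norm_zero] at this
      linarith
  | succ m ih =>
      intro e hpos hσ hmd γ hγ hn
      by_cases H : ∀ s η, 0 < η → {t | η ≤ ‖e s ⊓ e t‖}.Finite
      · exact core_disjointify hR e hpos hσ hγ hn H
      push_neg at H
      obtain ⟨s0, η, hη, hinf⟩ := H
      have hinf' : ({t | η ≤ ‖e s0 ⊓ e t‖} \ {s0}).Infinite :=
        Set.Infinite.diff hinf (Set.finite_singleton s0)
      set emb := hinf'.natEmbedding with hemb
      set t : ℕ → ℕ := fun j => (emb j : ℕ) with ht
      have ht_mem : ∀ j, t j ∈ {t | η ≤ ‖e s0 ⊓ e t‖} \ {s0} := fun j => (emb j).2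
      have ht_inj : Function.Injective t := fun a b hab => emb.injective (Subtype.ext hab)
      set F : ℕ → E := fun j => e s0 ⊓ e (t j) with hF
      have hFpos : ∀ j, 0 ≤ F j := fun j => inf_nonneg' (hpos _) (hpos _)
      have hFnorm : ∀ j, η ≤ ‖F j‖ := fun j => (ht_mem j).1
      rcases Nat.eq_zero_or_pos m with hm | hm
      · -- m = 0 : single-element set kills F 0
        have h0 : F 0 = 0 := by
          refine hmd {t 0} (by simp [hm]) (F 0) (hFpos 0) ?_
          intro i hi
          rw [Finset.mem_singleton] at hi
          subst hi
          exact inf_le_right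
        have := hFnorm 0
        rw [h0, norm_zero] at this
        linarith
      -- m ≥ 1
      refine ih F hFpos ?_ ?_ η hη hFnorm
      · -- AWNull F
        intro f hf
        have httop : Tendsto t atTop atTop := by
          rw [← Nat.cofinite_eq_atTop]
          exact ht_inj.tendsto_cofinite
        refine squeeze_zero (g := fun j => f (e (t j))) (fun j => hf _ (hFpos j)) (fun j => ?_) ?_
        · have h1 : 0 ≤ f (e (t j)) - f (F j) := by
            rw [← map_sub]
            exact hf _ (by rw [sub_nonneg]; exact inf_le_right)
          linarith
        · exact (hσ f hf).comp httop
      · -- MDisj m F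
        intro S hcard x hx hle
        obtain ⟨j0, hj0⟩ := Finset.card_pos.mp (by rw [hcard]; exact hm)
        have hxs0 : x ≤ e s0 := le_trans (hle j0 hj0) inf_le_left
        have hs0nm : s0 ∉ S.image t := by
          intro hmem
          rw [Finset.mem_image] at hmem
          obtain ⟨j, _, hj⟩ := hmem
          exact (ht_mem j).2 (by rw [Set.mem_singleton_iff, hj])
        refine hmd (insert s0 (S.image t)) ?_ x hx ?_
        · rw [Finset.card_insert_of_notMem hs0nm, Finset.card_image_of_injective S ht_inj, hcard]
        · intro i hi
          rw [Finset.mem_insert] at hi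
          rcases hi with rfl | hi
          · exact hxs0
          · rw [Finset.mem_image] at hi
            obtain ⟨j, hjS, rfl⟩ := hi
            exact le_trans (hle j hjS) inf_le_right

end Chunk5

section Chunk6

open Filter Topology

variable {E : Type*} [NormedAddCommGroup E] [Lattice E] [HasSolidNorm E] [IsOrderedAddMonoid E] [NormedSpace ℝ E] [PosSMulStrictMono ℝ E]

lemma sigmaOC [CompleteSpace E] (hR : DisjNull E) (u : ℕ → E) (B : E)
    (hmono : Monotone u) (hbd : ∀ n, u n ≤ B) : ∃ L, Tendsto u atTop (𝓝 L) := by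
  refine cauchySeq_tendsto_of_complete ?_
  by_contra hC
  rw [Metric.cauchySeq_iff] at hC
  push_neg at hC
  obtain ⟨ε, hε, hCC⟩ := hC
  have hpair : ∀ N, ∃ p : ℕ × ℕ, N ≤ p.1 ∧ p.1 < p.2 ∧ ε ≤ ‖u p.2 - u p.1‖ := by
    intro N
    obtain ⟨m, hm, n', hn', hd⟩ := hCC N
    rcases lt_trichotomy m n' with h | h | h
    · exact ⟨(m, n'), hm, h, by rwa [dist_eq_norm'] at hd⟩
    · subst h; rw [dist_self] at hd; linarith
    · exact ⟨(n', m), hn', h, by rwa [dist_eq_norm] at hd⟩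
  choose P hP1 hP2 hP3 using hpair
  set N : ℕ → ℕ := fun k => Nat.rec 0 (fun _ prev => (P prev).2 + 1) k with hN
  set q : ℕ → ℕ × ℕ := fun k => P (N k) with hq
  have hord : ∀ k, (q k).1 < (q k).2 := fun k => hP2 (N k)
  have hnrm : ∀ k, ε ≤ ‖u (q k).2 - u (q k).1‖ := fun k => hP3 (N k)
  have hchain : ∀ k, (q k).2 < (q (k+1)).1 := by
    intro k
    have h1 : N (k+1) = (q k).2 + 1 := rfl
    have h2 := hP1 (N (k+1))
    rw [h1] at h2
    exact lt_of_lt_of_le (Nat.lt_succ_self _) h2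
  set b : ℕ → E := fun k => u (q k).2 - u (q k).1 with hb
  have hbpos : ∀ k, 0 ≤ b k := fun k => sub_nonneg.mpr (hmono (hord k).le)
  have hbnrm : ∀ k, ε ≤ ‖b k‖ := hnrm
  set ubar : E := B - u (q 0).1 with hubar
  have hubar_nonneg : 0 ≤ ubar := sub_nonneg.mpr (hbd _)
  -- partial sums bounded
  have hrange : ∀ K, ∑ k ∈ Finset.range (K+1), b k ≤ u ((q K).2) - u ((q 0).1) := by
    intro K
    induction K with
    | zero => simp [hb]
    | succ K IH =>
        rw [Finset.sum_range_succ]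
        have h1 : u ((q K).2) ≤ u ((q (K+1)).1) := hmono (hchain K).le
        calc ∑ k ∈ Finset.range (K+1), b k + b (K+1)
            ≤ (u ((q K).2) - u ((q 0).1)) + (u ((q (K+1)).2) - u ((q (K+1)).1)) :=
              add_le_add IH (le_refl _)
          _ = (u ((q (K+1)).2) - u ((q 0).1)) + (u ((q K).2) - u ((q (K+1)).1)) := by abel
          _ ≤ (u ((q (K+1)).2) - u ((q 0).1)) + 0 :=
              add_le_add_right (sub_nonpos.mpr h1) _
          _ = u ((q (K+1)).2) - u ((q 0).1) := by abel
  have hsumbound : ∀ s : Finset ℕ, ∑ k ∈ s, b k ≤ ubar := by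
    intro s
    rcases s.eq_empty_or_nonempty with rfl | hne
    · simpa using hubar_nonneg
    · set K := s.max' hne with hK
      have hsub : s ⊆ Finset.range (K+1) := by
        intro k hk
        rw [Finset.mem_range]
        exact Nat.lt_succ_of_le (Finset.le_max' s k hk)
      calc ∑ k ∈ s, b k ≤ ∑ k ∈ Finset.range (K+1), b k :=
            Finset.sum_le_sum_of_subset_of_nonneg hsub (fun k _ _ => hbpos k)
        _ ≤ u ((q K).2) - u ((q 0).1) := hrange K
        _ ≤ ubar := sub_le_sub_right (hbd _) _
  have hbub : ∀ k, b k ≤ ubar := by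
    intro k
    have := hsumbound {k}
    simpa using this
  have hubar_ne : ubar ≠ 0 := by
    intro h0
    have h1 : b 0 ≤ 0 := h0 ▸ hbub 0
    have h2 : b 0 = 0 := le_antisymm h1 (hbpos 0)
    have := hbnrm 0
    rw [h2, norm_zero] at this
    linarith
  have hubar_norm : 0 < ‖ubar‖ := norm_pos_iff.mpr hubar_ne
  set θ : ℝ := ε / (2 * ‖ubar‖) with hθ
  have hθpos : 0 < θ := div_pos hε (by linarith)
  have hθu_nonneg : 0 ≤ θ • ubar := smul_nonneg hθpos.le hubar_nonneg
  set e : ℕ → E := fun k => (b k - θ • ubar)⁺ with he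
  have hepos : ∀ k, 0 ≤ e k := fun k => posPart_nonneg _
  have heb : ∀ k, e k ≤ b k := fun k =>
    posPart_le_of_le (sub_le_self _ hθu_nonneg) (hbpos k)
  have henrm : ∀ k, ε/2 ≤ ‖e k‖ := by
    intro k
    have h1 : b k - e k = b k ⊓ (θ • ubar) := by
      have hek : e k = (b k - θ • ubar)⁺ := rfl
      rw [hek, posPart_sub_eq]
      abel
    have h2 : ‖b k - e k‖ ≤ ε/2 := by
      rw [h1]
      refine le_trans (norm_inf_le_right (hbpos k) hθu_nonneg) ?_
      rw [norm_smul, Real.norm_eq_abs, abs_of_pos hθpos, hθ]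
      refine le_of_eq ?_
      have hne := ne_of_gt hubar_norm
      field_simp
    have h3 : ‖b k‖ ≤ ‖e k‖ + ‖b k - e k‖ := by
      calc ‖b k‖ = ‖e k + (b k - e k)‖ := by congr 1; abel
        _ ≤ ‖e k‖ + ‖b k - e k‖ := norm_add_le _ _
    have := hbnrm k
    linarith
  have heAW : AWNull e := by
    intro f hf
    have hsummable : Summable (fun k => f (b k)) := by
      refine summable_of_sum_range_le (c := f ubar) (fun k => hf _ (hbpos k)) ?_
      intro K
      rw [← map_sum]
      have h1 : 0 ≤ f (ubar - ∑ k ∈ Finset.range K, b k) := hf _ (by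
        rw [sub_nonneg]; exact hsumbound _)
      rw [map_sub] at h1
      linarith
    refine squeeze_zero (g := fun k => f (b k)) (fun k => hf _ (hepos k)) (fun k => ?_)
      hsummable.tendsto_atTop_zero
    have h1 : 0 ≤ f (b k) - f (e k) := by
      rw [← map_sub]
      exact hf _ (by rw [sub_nonneg]; exact heb k)
    linarith
  set M : ℕ := ⌈2/θ⌉₊ with hM
  have hMθ : 2 ≤ (M:ℝ) * θ := by
    have h1 := Nat.le_ceil (2/θ)
    calc (2:ℝ) = (2/θ) * θ := by field_simp
      _ ≤ (M:ℝ) * θ := mul_le_mul_of_nonneg_right h1 hθpos.le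
  have hMD : MDisj M e := by
    intro s hcard x hx hle
    have hdis : ∀ k ∈ s, x ⊓ (θ • ubar - b k)⁺ = 0 := by
      intro k hk
      have h1 : (θ • ubar - b k)⁺ = (b k - θ • ubar)⁻ := by
        rw [← neg_sub (b k) (θ • ubar), posPart_neg]
      have h2 : x ⊓ (θ • ubar - b k)⁺ ≤ (b k - θ • ubar)⁺ ⊓ (b k - θ • ubar)⁻ := by
        rw [h1]
        exact inf_le_inf (hle k hk) (le_refl _)
      rw [posPart_inf_negPart_eq_zero] at h2
      refine le_antisymm h2 (inf_nonneg' hx ?_)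
      rw [h1]
      exact negPart_nonneg _
    have hxA : ∀ s' : Finset ℕ, (∀ k ∈ s', x ⊓ (θ • ubar - b k)⁺ = 0) →
        x ⊓ (∑ k ∈ s', (θ • ubar - b k)⁺) = 0 := by
      classical
      intro s'
      induction s' using Finset.induction_on with
      | empty => intro _; simpa using inf_eq_right.mpr hx
      | insert a t hnotmem IH =>
          intro hall
          rw [Finset.sum_insert hnotmem]
          exact inf_eq_zero_add x _ _ hx (posPart_nonneg _)
            (Finset.sum_nonneg (fun k _ => posPart_nonneg _))
            (hall a (Finset.mem_insert_self a t))
            (IH (fun k hk => hall k (Finset.mem_insert_of_mem hk)))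
    have h1 : ∑ k ∈ s, (θ • ubar - b k) ≤ ∑ k ∈ s, (θ • ubar - b k)⁺ :=
      Finset.sum_le_sum (fun k _ => le_posPart _)
    have h3 : (M:ℝ) • (θ • ubar) = ((M:ℝ) * θ) • ubar := smul_smul _ _ _
    have h2 : ∑ k ∈ s, (θ • ubar - b k) = ((M:ℝ) * θ) • ubar - ∑ k ∈ s, b k := by
      rw [Finset.sum_sub_distrib, Finset.sum_const, hcard, ← h3, ← Nat.cast_smul_eq_nsmul ℝ]
    have hA_ge : ubar ≤ ∑ k ∈ s, (θ • ubar - b k)⁺ := by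
      calc ubar = (2:ℝ) • ubar - ubar := by rw [two_smul]; abel
        _ ≤ ((M:ℝ)*θ) • ubar - ubar := by
            refine sub_le_sub_right ?_ _
            have h5 : 0 ≤ ((M:ℝ)*θ - 2) • ubar := smul_nonneg (by linarith) hubar_nonneg
            have h6 : ((M:ℝ)*θ) • ubar - (2:ℝ) • ubar = ((M:ℝ)*θ - 2) • ubar := by
              rw [sub_smul]
            rw [← sub_nonneg, h6]
            exact h5
        _ ≤ ((M:ℝ)*θ) • ubar - ∑ k ∈ s, b k := sub_le_sub_left (hsumbound s) _
        _ = ∑ k ∈ s, (θ • ubar - b k) := h2.symm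
        _ ≤ ∑ k ∈ s, (θ • ubar - b k)⁺ := h1
    have hsne : s.Nonempty := by
      refine Finset.card_pos.mp ?_
      rw [hcard]
      refine Nat.ceil_pos.mpr ?_
      positivity
    obtain ⟨k0, hk0⟩ := hsne
    have hxu : x ≤ ubar := le_trans (le_trans (hle k0 hk0) (heb k0)) (hbub k0)
    have hxz : x ≤ 0 := by
      have h6 : x ⊓ x ≤ x ⊓ (∑ k ∈ s, (θ • ubar - b k)⁺) :=
        inf_le_inf_left x (le_trans hxu hA_ge)
      rw [inf_idem, hxA s hdis] at h6
      exact h6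
    exact le_antisymm hxz hx
  exact lemmaA hR M e hepos heAW hMD (ε/2) (by linarith) henrm

end Chunk6

section Chunk7

open Filter Topology

variable {E : Type*} [NormedAddCommGroup E] [Lattice E] [HasSolidNorm E] [IsOrderedAddMonoid E] [NormedSpace ℝ E] [PosSMulStrictMono ℝ E]

lemma norm_le_of_nonneg_le {a b : E} (ha : 0 ≤ a) (hab : a ≤ b) : ‖a‖ ≤ ‖b‖ := by
  refine norm_le_norm_of_abs_le_abs ?_
  rw [abs_of_nonneg ha, abs_of_nonneg (le_trans ha hab)]
  exact hab

lemma exists_subseq_ge {a : ℕ → ℝ} (h0 : ∀ n, 0 ≤ a n) (h : ¬ Tendsto a atTop (𝓝 0)) :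
    ∃ δ : ℝ, 0 < δ ∧ ∃ φ : ℕ → ℕ, StrictMono φ ∧ ∀ k, δ ≤ a (φ k) := by
  rw [Metric.tendsto_atTop] at h
  push_neg at h
  obtain ⟨ε, hε, hfreq⟩ := h
  have hfr : ∃ᶠ n in atTop, ε ≤ a n := by
    rw [frequently_atTop]
    intro N
    obtain ⟨n, hn, hd⟩ := hfreq N
    refine ⟨n, hn, ?_⟩
    rwa [Real.dist_eq, sub_zero, abs_of_nonneg (h0 n)] at hd
  obtain ⟨φ, hφ, hφ2⟩ := extraction_of_frequently_atTop hfr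
  exact ⟨ε, hε, φ, hφ, hφ2⟩

lemma pos_functional_sup_le (F : E →L[ℝ] ℝ) (hF : ∀ x : E, 0 ≤ x → 0 ≤ F x)
    (a b : E) (ha : 0 ≤ a) (hb : 0 ≤ b) : F (a ⊔ b) ≤ F a + F b := by
  have h1 : a ⊔ b ≤ a + b := sup_le (le_add_of_nonneg_right hb) (le_add_of_nonneg_left ha)
  have h2 : 0 ≤ F (a + b) - F (a ⊔ b) := by
    rw [← map_sub]
    exact hF _ (by rwa [sub_nonneg])
  rw [map_add] at h2
  linarith

lemma intervalNull [CompleteSpace E] (hR : DisjNull E) (u : E) (g : ℕ → E)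
    (hpos : ∀ n, 0 ≤ g n) (hbd : ∀ n, g n ≤ u) (hσ : AWNull g) :
    Tendsto (fun n => ‖g n‖) atTop (𝓝 0) := by
  classical
  by_contra hC
  obtain ⟨δ, hδ, φ, hφmono, hφ⟩ := exists_subseq_ge (fun n => norm_nonneg _) hC
  set g' : ℕ → E := fun n => g (φ n) with hg'
  have hpos' : ∀ n, 0 ≤ g' n := fun n => hpos _
  have hbd' : ∀ n, g' n ≤ u := fun n => hbd _
  have hσ' : AWNull g' := fun f hf => (hσ f hf).comp hφmono.tendsto_atTop
  have hδ' : ∀ n, δ ≤ ‖g' n‖ := hφ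
  have hne : ∀ n, g' n ≠ 0 := by
    intro n h0
    have h1 := hδ' n
    rw [h0, norm_zero] at h1
    linarith
  choose F hFpos hFnorm hFbd using fun n => exists_norming (g' n) (hpos' n) (hne n)
  -- diagonal subsequence n with F (n i) (g' (n k)) ≤ (1/2)^k for i < k
  set Fstep : (k : ℕ) → ((i : ℕ) → i < k → ℕ) → ℕ := fun k prev =>
    sInf {t | ∀ i, (hi : i < k) → prev i hi < t ∧ F (prev i hi) (g' t) ≤ (1/2)^k} with hFstep
  set n := recSeq Fstep with hn
  have hmem : ∀ k, n k ∈ {t | ∀ i, (hi : i < k) → n i < t ∧ F (n i) (g' t) ≤ (1/2)^k} := by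
    intro k
    have heq : n k = sInf {t | ∀ i, (hi : i < k) → n i < t ∧ F (n i) (g' t) ≤ (1/2)^k} := by
      rw [hn, recSeq_eq]
    rw [heq]
    apply Nat.sInf_mem
    have hev : ∀ᶠ t in atTop, ∀ i ∈ Finset.range k, n i < t ∧ F (n i) (g' t) ≤ (1/2)^k := by
      rw [eventually_all_finset]
      intro i _
      have h1 : ∀ᶠ t in atTop, n i < t := eventually_gt_atTop (n i)
      have h2 : ∀ᶠ t in atTop, F (n i) (g' t) ≤ (1/2)^k := by
        have h3 := hσ' (F (n i)) (hFpos (n i))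
        have h4 : (0:ℝ) < (1/2)^k := by positivity
        filter_upwards [h3.eventually (Metric.ball_mem_nhds (0:ℝ) h4)] with t ht
        have ht' : |F (n i) (g' t)| < (1/2)^k := by
          simpa [Real.dist_eq] using ht
        exact le_of_lt (lt_of_le_of_lt (le_abs_self _) ht')
      filter_upwards [h1, h2] with t ht1 ht2 using ⟨ht1, ht2⟩
    obtain ⟨t, ht⟩ := hev.exists
    exact ⟨t, fun i hi => ht i (Finset.mem_range.mpr hi)⟩
  have hlt : ∀ k i, i < k → n i < n k := fun k i hi => ((hmem k) i hi).1
  have hnmono : StrictMono n := fun a b hab => hlt b a hab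
  have hcond : ∀ i k, i < k → F (n i) (g' (n k)) ≤ (1/2)^k := fun i k hik => ((hmem k) i hik).2
  set G : ℕ → E := fun k => g' (n k) with hG
  have hGpos : ∀ k, 0 ≤ G k := fun k => hpos' _
  have hGbd : ∀ k, G k ≤ u := fun k => hbd' _
  -- the running sups
  set W : ℕ → ℕ → E := fun j => fun N => Nat.rec (G j) (fun N' prev => prev ⊔ G (j + N' + 1)) N
    with hW
  have hW0 : ∀ j, W j 0 = G j := fun j => rfl
  have hWs : ∀ j N, W j (N+1) = W j N ⊔ G (j + N + 1) := fun j N => rfl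
  have hWmono : ∀ j, Monotone (W j) := by
    intro j
    refine monotone_nat_of_le_succ ?_
    intro N
    rw [hWs]
    exact le_sup_left
  have hWbd : ∀ j N, W j N ≤ u := by
    intro j N
    induction N with
    | zero => exact hGbd j
    | succ N IH => rw [hWs]; exact sup_le IH (hGbd _)
  have hWpos : ∀ j N, 0 ≤ W j N := by
    intro j N
    exact le_trans (hGpos j) (by rw [← hW0 j]; exact hWmono j (Nat.zero_le N))
  have hGW : ∀ j N, G (j + N) ≤ W j N := by
    intro j N
    induction N with
    | zero => exact le_of_eq rfl
    | succ N _ =>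
        rw [hWs]
        have : j + (N + 1) = j + N + 1 := by omega
        rw [this]
        exact le_sup_right
  obtain ⟨w, hw⟩ : ∃ w : ℕ → E, ∀ j, Tendsto (W j) atTop (𝓝 (w j)) := by
    have h1 : ∀ j, ∃ L, Tendsto (W j) atTop (𝓝 L) :=
      fun j => sigmaOC hR (W j) u (hWmono j) (hWbd j)
    choose w hw using h1
    exact ⟨w, hw⟩
  have hWw : ∀ j N, W j N ≤ w j := fun j => (hWmono j).ge_of_tendsto (hw j)
  have hGw : ∀ j k, j ≤ k → G k ≤ w j := by
    intro j k hjk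
    have h1 : k = j + (k - j) := by omega
    rw [h1]
    exact le_trans (hGW j (k - j)) (hWw j _)
  have hwpos : ∀ j, 0 ≤ w j :=
    fun j => le_trans (hWpos j 0) (hWw j 0)
  have hWshift : ∀ j N, W (j+1) N ≤ W j (N+1) := by
    intro j N
    induction N with
    | zero =>
        rw [hW0, hWs, hW0]
        have : j + 0 + 1 = j + 1 := by omega
        rw [this]
        exact le_sup_right
    | succ N IH =>
        rw [hWs (j+1) N, hWs j (N+1)]
        refine sup_le (le_trans IH le_sup_left) ?_
        have : j + 1 + N + 1 = j + (N + 1) + 1 := by omega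
        rw [this]
        exact le_sup_right
  have hwmono : ∀ j, w (j+1) ≤ w j := by
    intro j
    have h2 : Tendsto (fun N => W j (N+1)) atTop (𝓝 (w j)) :=
      (hw j).comp (tendsto_add_atTop_nat 1)
    exact le_of_tendsto_of_tendsto' (hw (j+1)) h2 (hWshift j)
  have hwanti : Antitone w := antitone_nat_of_succ_le hwmono
  -- limit v of w
  obtain ⟨L, hL⟩ := sigmaOC hR (fun j => w 0 - w j) (w 0)
    (fun a b hab => sub_le_sub_left (hwanti hab) _)
    (fun j => sub_le_self _ (hwpos j))
  set v : E := w 0 - L with hv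
  have hwv : Tendsto w atTop (𝓝 v) := by
    have h1 : Tendsto (fun j => w 0 - (w 0 - w j)) atTop (𝓝 (w 0 - L)) :=
      tendsto_const_nhds.sub hL
    simpa using h1
  have hvw : ∀ j, v ≤ w j := fun j => hwanti.le_of_tendsto hwv j
  have hvpos : 0 ≤ v := le_of_tendsto_of_tendsto' tendsto_const_nhds hwv hwpos
  -- F (n i) (w j) small
  have hFW : ∀ i j N, i < j → F (n i) (W j N) ≤ 2 * (1/2)^j := by
    intro i j N hij
    have key : ∀ N, F (n i) (W j N) ≤ ∑ t ∈ Finset.range (N+1), (1/2)^(j+t) := by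
      intro N
      induction N with
      | zero =>
          show F (n i) (g' (n j)) ≤ _
          simpa using hcond i j hij
      | succ N IH =>
          rw [hWs]
          refine le_trans (pos_functional_sup_le _ (hFpos (n i)) _ _ (hWpos j N) (hGpos _)) ?_
          rw [Finset.sum_range_succ]
          refine add_le_add IH ?_
          have h1 : i < j + N + 1 := by omega
          have h2 := hcond i (j + N + 1) h1
          have h3 : j + (N+1) = j + N + 1 := by omega
          rw [h3]
          exact h2
    refine le_trans (key N) ?_
    have h4 : ∀ t : ℕ, ((1:ℝ)/2)^(j+t) = (1/2)^j * (1/2)^t := fun t => pow_add _ _ _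
    calc ∑ t ∈ Finset.range (N+1), ((1:ℝ)/2)^(j+t)
        = (1/2)^j * ∑ t ∈ Finset.range (N+1), ((1:ℝ)/2)^t := by
          rw [Finset.mul_sum]
          exact Finset.sum_congr rfl (fun t _ => h4 t)
      _ ≤ (1/2)^j * 2 := by
          refine mul_le_mul_of_nonneg_left (sum_geometric_two_le _) (by positivity)
      _ = 2 * (1/2)^j := by ring
  have hFwj : ∀ i j, i < j → F (n i) (w j) ≤ 2 * (1/2)^j := by
    intro i j hij
    have h1 : Tendsto (fun N => F (n i) (W j N)) atTop (𝓝 (F (n i) (w j))) :=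
      ((F (n i)).continuous.tendsto _).comp (hw j)
    exact le_of_tendsto_of_tendsto' h1 tendsto_const_nhds (fun N => hFW i j N hij)
  have hFv : ∀ i, F (n i) v = 0 := by
    intro i
    have hle : F (n i) v ≤ 0 := by
      have h1 : ∀ j, i < j → F (n i) v ≤ 2 * (1/2)^j := by
        intro j hij
        have h2 : 0 ≤ F (n i) (w j) - F (n i) v := by
          rw [← map_sub]
          exact hFpos (n i) _ (by rw [sub_nonneg]; exact hvw j)
        have h3 := hFwj i j hij
        linarith
      have h4 : Tendsto (fun j : ℕ => 2 * ((1:ℝ)/2)^j) atTop (𝓝 0) := by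
        have h5 : Tendsto (fun j : ℕ => ((1:ℝ)/2)^j) atTop (𝓝 0) :=
          tendsto_pow_atTop_nhds_zero_of_lt_one (by norm_num) (by norm_num)
        simpa using h5.const_mul 2
      refine le_of_tendsto_of_tendsto tendsto_const_nhds h4 ?_
      filter_upwards [eventually_gt_atTop i] with j hj using h1 j hj
    exact le_antisymm hle (hFpos (n i) v hvpos)
  -- final contradiction
  have hwvnorm : Tendsto (fun j => ‖w j - v‖) atTop (𝓝 0) := by
    have h1 : Tendsto (fun j => w j - v) atTop (𝓝 0) := by
      simpa using hwv.sub (tendsto_const_nhds (x := v))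
    simpa [Function.comp_def] using (continuous_norm.tendsto (0:E)).comp h1
  obtain ⟨j, hj⟩ : ∃ j, ‖w j - v‖ < δ := by
    have := hwvnorm.eventually (Metric.ball_mem_nhds (0:ℝ) hδ)
    obtain ⟨j, hjj⟩ := this.exists
    have hjj' : |‖w j - v‖ - 0| < δ := by simpa [Real.dist_eq] using hjj
    rw [sub_zero] at hjj'
    exact ⟨j, lt_of_le_of_lt (le_abs_self _) hjj'⟩
  have hdecomp : G j = G j ⊓ v + (G j - v)⁺ := by
    rw [posPart_sub_eq]
    abel
  have hstep1 : F (n j) (G j ⊓ v) ≤ 0 := by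
    have h1 : 0 ≤ F (n j) v - F (n j) (G j ⊓ v) := by
      rw [← map_sub]
      exact hFpos (n j) _ (by rw [sub_nonneg]; exact inf_le_right)
    have h2 := hFv j
    linarith
  have hstep2 : F (n j) ((G j - v)⁺) ≤ ‖w j - v‖ := by
    have h1 : (G j - v)⁺ ≤ w j - v := by
      refine posPart_le_of_le (sub_le_sub_right (hGw j j (le_refl j)) v) ?_
      rw [sub_nonneg]
      exact hvw j
    have h2 : ‖(G j - v)⁺‖ ≤ ‖w j - v‖ := norm_le_of_nonneg_le (posPart_nonneg _) h1
    exact le_trans (le_trans (le_abs_self _) (hFbd (n j) _)) h2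
  have hfinal : δ ≤ F (n j) (G j) := le_trans (hδ' (n j)) (hFnorm (n j))
  rw [hdecomp, map_add] at hfinal
  linarith

end Chunk7

/-- A Banach lattice has the positive Schur property iff every pairwise disjoint absolutely
weakly null sequence is norm null. -/
theorem positiveSchur_iff_disjoint_absWeakNull_normNull {E : Type*} [NormedAddCommGroup E] [Lattice E] [HasSolidNorm E] [IsOrderedAddMonoid E] [NormedSpace ℝ E] [PosSMulStrictMono ℝ E] [CompleteSpace E] :
    (∀ x : ℕ → E, (∀ n, 0 ≤ x n) →
        (∀ f : E →L[ℝ] ℝ, Tendsto (fun n => f (x n)) atTop (𝓝 0)) →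
        Tendsto (fun n => ‖x n‖) atTop (𝓝 0)) ↔
      (∀ x : ℕ → E, (∀ m n, m ≠ n → |x m| ⊓ |x n| = 0) →
        Tendsto x atTop (@nhds E (absWeakTopology E) 0) →
        Tendsto (fun n => ‖x n‖) atTop (𝓝 0)) := by
  constructor
  · -- forward
    intro hPS x _hdisj habs
    rw [tendsto_absWeak_iff] at habs
    have key : ∀ f : E →L[ℝ] ℝ, Tendsto (fun n => f |x n|) atTop (𝓝 0) := by
      intro f
      obtain ⟨F, hFpos, hFge, _⟩ := exists_posPart_functional f
      have h1 : Tendsto (fun n => F |x n|) atTop (𝓝 0) := habs F hFpos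
      have h2 : ∀ v : E, 0 ≤ v → 0 ≤ (F - f) v := by
        intro v hv
        rw [ContinuousLinearMap.sub_apply, sub_nonneg]
        exact hFge v hv
      have h3 : Tendsto (fun n => (F - f) |x n|) atTop (𝓝 0) := habs (F - f) h2
      have h4 : (fun n => f |x n|) = fun n => F |x n| - (F - f) |x n| := by
        funext n
        rw [ContinuousLinearMap.sub_apply]
        ring
      rw [h4]
      simpa using h1.sub h3
    have hmain := hPS (fun n => |x n|) (fun n => abs_nonneg _) key
    have heq : (fun n => ‖|x n|‖) = fun n => ‖x n‖ := funext fun n => norm_abs_eq_norm _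
    rwa [heq] at hmain
  · -- backward
    intro hDisj x hxpos hxweak
    have hR : DisjNull E := by
      intro z hzpos hzdisj hzAW
      refine hDisj z ?_ ?_
      · intro m n' hmn
        rw [abs_of_nonneg (hzpos m), abs_of_nonneg (hzpos n')]
        exact hzdisj m n' hmn
      · rw [tendsto_absWeak_iff]
        intro f hf
        have h1 : (fun n => f |z n|) = fun n => f (z n) := by
          funext n
          rw [abs_of_nonneg (hzpos n)]
        rw [h1]
        exact hzAW f hf
    by_contra hC
    obtain ⟨δ, hδ, φ, hφmono, hφ⟩ := exists_subseq_ge (fun n => norm_nonneg _) hC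
    set h : ℕ → E := fun k => x (φ k) with hh
    have hpos : ∀ k, 0 ≤ h k := fun k => hxpos _
    have hσ : AWNull h := fun f _hf => (hxweak f).comp hφmono.tendsto_atTop
    by_cases H : ∀ s η, 0 < η → {t | η ≤ ‖h s ⊓ h t‖}.Finite
    · exact core_disjointify hR h hpos hσ hδ hφ H
    · push_neg at H
      obtain ⟨s0, η, hη, hinf⟩ := H
      have hinf' : ({t | η ≤ ‖h s0 ⊓ h t‖}).Infinite := hinf
      set emb := hinf'.natEmbedding with hembd
      set t : ℕ → ℕ := fun j => (emb j : ℕ) with htd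
      have ht_mem : ∀ j, η ≤ ‖h s0 ⊓ h (t j)‖ := fun j => (emb j).2
      have ht_inj : Function.Injective t := fun a b hab => emb.injective (Subtype.ext hab)
      set Fj : ℕ → E := fun j => h s0 ⊓ h (t j) with hFj
      have h1 : Tendsto (fun j => ‖Fj j‖) atTop (𝓝 0) := by
        refine intervalNull hR (h s0) Fj (fun j => inf_nonneg' (hpos _) (hpos _))
          (fun j => inf_le_left) ?_
        intro f hf
        have httop : Tendsto t atTop atTop := by
          rw [← Nat.cofinite_eq_atTop]
          exact ht_inj.tendsto_cofinite
        refine squeeze_zero (g := fun j => f (h (t j)))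
          (fun j => hf _ (inf_nonneg' (hpos _) (hpos _))) (fun j => ?_)
          ((hσ f hf).comp httop)
        have h2 : 0 ≤ f (h (t j)) - f (Fj j) := by
          rw [← map_sub]
          exact hf _ (by rw [sub_nonneg]; exact inf_le_right)
        linarith
      obtain ⟨j, hj⟩ : ∃ j, ‖Fj j‖ < η := by
        have h2 := h1.eventually (Metric.ball_mem_nhds (0:ℝ) hη)
        obtain ⟨j, hjj⟩ := h2.exists
        have hjj' : |‖Fj j‖ - 0| < η := by simpa [Real.dist_eq] using hjj
        rw [sub_zero] at hjj'
        exact ⟨j, lt_of_le_of_lt (le_abs_self _) hjj'⟩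
      have := ht_mem j
      have hFjj : ‖Fj j‖ = ‖h s0 ⊓ h (t j)‖ := rfl
      linarith [hFjj ▸ hj]
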